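/- Let U be a Hopf algebra over a field k, let ℛ⁽⁰⁾ be an algebra automorphism of U⊗U, and let R⁽¹⁾ ∈ U⊗U be an invertible element such that: (RR1) Ad(R⁽¹⁾)∘ℛ⁽⁰⁾∘Δ = Δ^op as maps U → U⊗U; (RR2) (Δ⊗id_U)∘ℛ⁽⁰⁾ = ℛ⁽⁰⁾₁₃∘ℛ⁽⁰⁾₂₃∘(Δ⊗id_U); (RR3) (id_U⊗Δ)∘ℛ⁽⁰⁾ = ℛ⁽⁰⁾₁₃∘ℛ⁽⁰⁾₁₂∘(id_U⊗Δ); (RR4) (Δ⊗id_U)(R⁽¹⁾) = R⁽¹⁾₁₃ · ℛ⁽⁰⁾₁₃(R⁽¹⁾₂₃); (RR5) (id_U⊗Δ)(R⁽¹⁾) = R⁽¹⁾₁₃ · ℛ⁽⁰⁾₁₃(R⁽¹⁾₁₂). Then ℛ := Ad(R⁽¹⁾)∘ℛ⁽⁰⁾ satisfies conditions (wq1), (wq2) and (wq3), i.e. (U, ℛ) is a weakly quasitriangular Hopf algebra. -/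

import Mathlib

open TensorProduct

noncomputable section

variable (k : Type*) [Field k]

/-- Conjugation by a unit, as a `k`-algebra automorphism. -/
def adUnit {A : Type*} [Ring A] [Algebra k A] (u : Aˣ) : A ≃ₐ[k] A where
  toFun a := ↑u * a * ↑u⁻¹
  invFun a := ↑u⁻¹ * a * ↑u
  left_inv a := by simp [mul_assoc]
  right_inv a := by simp [mul_assoc]
  map_add' a b := by noncomm_ring
  map_mul' a b := by
    show ↑u * (a * b) * ↑u⁻¹ = ↑u * a * ↑u⁻¹ * (↑u * b * ↑u⁻¹)
    simp [mul_assoc]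
  commutes' r := by
    show ↑u * algebraMap k A r * ↑u⁻¹ = algebraMap k A r
    rw [← Algebra.commutes r (↑u : A), mul_assoc, Units.mul_inv, mul_one]

variable (U : Type*) [Ring U] [HopfAlgebra k U]

/-- The coproduct `Δ : U → U ⊗ U` as an algebra homomorphism. -/
abbrev Δ : U →ₐ[k] U ⊗[k] U := Bialgebra.comulAlgHom k U

/-- The opposite coproduct `Δᵒᵖ = σ ∘ Δ`. -/
def Δop : U →ₐ[k] U ⊗[k] U :=
  (Algebra.TensorProduct.comm k U U).toAlgHom.comp (Bialgebra.comulAlgHom k U)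

/-- The flip of the last two tensor factors of `(U ⊗ U) ⊗ U`. -/
def σ23 : ((U ⊗[k] U) ⊗[k] U) ≃ₐ[k] ((U ⊗[k] U) ⊗[k] U) :=
  (Algebra.TensorProduct.assoc k k k U U U).trans <|
    (Algebra.TensorProduct.congr AlgEquiv.refl (Algebra.TensorProduct.comm k U U)).trans
      (Algebra.TensorProduct.assoc k k k U U U).symm

variable {k U}

/-- `F₁₂ = F ⊗ id` on `(U ⊗ U) ⊗ U`. -/
def leg12 (F : (U ⊗[k] U) ≃ₐ[k] (U ⊗[k] U)) :
    ((U ⊗[k] U) ⊗[k] U) ≃ₐ[k] ((U ⊗[k] U) ⊗[k] U) :=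
  Algebra.TensorProduct.congr F AlgEquiv.refl

/-- `F₂₃ = id ⊗ F` on `(U ⊗ U) ⊗ U` (transported along the associator). -/
def leg23 (F : (U ⊗[k] U) ≃ₐ[k] (U ⊗[k] U)) :
    ((U ⊗[k] U) ⊗[k] U) ≃ₐ[k] ((U ⊗[k] U) ⊗[k] U) :=
  (Algebra.TensorProduct.assoc k k k U U U).trans <|
    (Algebra.TensorProduct.congr AlgEquiv.refl F).trans
      (Algebra.TensorProduct.assoc k k k U U U).symm

/-- `F₁₃ = σ₂₃ ∘ F₁₂ ∘ σ₂₃` on `(U ⊗ U) ⊗ U`. -/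
def leg13 (F : (U ⊗[k] U) ≃ₐ[k] (U ⊗[k] U)) :
    ((U ⊗[k] U) ⊗[k] U) ≃ₐ[k] ((U ⊗[k] U) ⊗[k] U) :=
  (σ23 k U).trans ((leg12 F).trans (σ23 k U))

/-- `u₁₂ = u ⊗ 1` in `(U ⊗ U) ⊗ U`. -/
def el12 (u : U ⊗[k] U) : (U ⊗[k] U) ⊗[k] U := u ⊗ₜ[k] (1 : U)

/-- `u₂₃ = 1 ⊗ u` in `(U ⊗ U) ⊗ U`. -/
def el23 (u : U ⊗[k] U) : (U ⊗[k] U) ⊗[k] U :=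
  (Algebra.TensorProduct.assoc k k k U U U).symm ((1 : U) ⊗ₜ[k] u)

/-- `u₁₃ = σ₂₃ (u₁₂)` in `(U ⊗ U) ⊗ U`. -/
def el13 (u : U ⊗[k] U) : (U ⊗[k] U) ⊗[k] U := σ23 k U (el12 u)

variable (k U)

/-- `Δ ⊗ id : U ⊗ U → (U ⊗ U) ⊗ U`. -/
def ΔId : (U ⊗[k] U) →ₐ[k] ((U ⊗[k] U) ⊗[k] U) :=
  Algebra.TensorProduct.map (Bialgebra.comulAlgHom k U) (AlgHom.id k U)

/-- `id ⊗ Δ : U ⊗ U → (U ⊗ U) ⊗ U` (transported along the associator). -/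
def IdΔ : (U ⊗[k] U) →ₐ[k] ((U ⊗[k] U) ⊗[k] U) :=
  (Algebra.TensorProduct.assoc k k k U U U).symm.toAlgHom.comp
    (Algebra.TensorProduct.map (AlgHom.id k U) (Bialgebra.comulAlgHom k U))

end

section myhelpers
variable {k : Type*} [Field k] {U : Type*} [Ring U] [HopfAlgebra k U]

lemma adUnit_apply (u : (U ⊗[k] U)ˣ) (z : U ⊗[k] U) :
    adUnit k u z = ↑u * z * ↑u⁻¹ := rfl

lemma σ23_tmul (a b c : U) :
    σ23 k U ((a ⊗ₜ[k] b) ⊗ₜ[k] c) = (a ⊗ₜ[k] c) ⊗ₜ[k] b := by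
  simp [σ23, Algebra.TensorProduct.assoc_tmul, Algebra.TensorProduct.assoc_symm_tmul]

lemma σ23_σ23 (y : (U ⊗[k] U) ⊗[k] U) : σ23 k U (σ23 k U y) = y := by
  induction y using TensorProduct.induction_on with
  | zero => simp
  | tmul a c =>
    induction a using TensorProduct.induction_on with
    | zero => simp
    | tmul a b => rw [σ23_tmul, σ23_tmul]
    | add x y hx hy => simp only [TensorProduct.add_tmul, map_add, hx, hy]
  | add x y hx hy => simp only [map_add, hx, hy]

lemma leg12_trans' (F G : (U ⊗[k] U) ≃ₐ[k] (U ⊗[k] U)) :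
    leg12 (F.trans G) = (leg12 F).trans (leg12 G) :=
  Algebra.TensorProduct.congr_trans F G AlgEquiv.refl AlgEquiv.refl

lemma leg12_trans (F G : (U ⊗[k] U) ≃ₐ[k] (U ⊗[k] U)) (y : (U ⊗[k] U) ⊗[k] U) :
    leg12 (F.trans G) y = leg12 G (leg12 F y) := by
  rw [leg12_trans', AlgEquiv.trans_apply]

lemma congr_refl_trans (F G : (U ⊗[k] U) ≃ₐ[k] (U ⊗[k] U)) :
    Algebra.TensorProduct.congr (AlgEquiv.refl : U ≃ₐ[k] U) (F.trans G) =
      (Algebra.TensorProduct.congr AlgEquiv.refl F).trans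
        (Algebra.TensorProduct.congr AlgEquiv.refl G) :=
  Algebra.TensorProduct.congr_trans AlgEquiv.refl AlgEquiv.refl F G

lemma leg23_trans (F G : (U ⊗[k] U) ≃ₐ[k] (U ⊗[k] U)) (y : (U ⊗[k] U) ⊗[k] U) :
    leg23 (F.trans G) y = leg23 G (leg23 F y) := by
  simp only [leg23, congr_refl_trans, AlgEquiv.trans_apply, AlgEquiv.apply_symm_apply]

lemma leg13_trans (F G : (U ⊗[k] U) ≃ₐ[k] (U ⊗[k] U)) (y : (U ⊗[k] U) ⊗[k] U) :
    leg13 (F.trans G) y = leg13 G (leg13 F y) := by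
  simp [leg13, leg12_trans, σ23_σ23]

lemma congr_refl_mul (u : (U ⊗[k] U)ˣ) (z : U ⊗[k] (U ⊗[k] U)) :
    Algebra.TensorProduct.congr (AlgEquiv.refl : U ≃ₐ[k] U) (adUnit k u) z =
      ((1 : U) ⊗ₜ[k] (↑u : U ⊗[k] U)) * z * ((1 : U) ⊗ₜ[k] (↑u⁻¹ : U ⊗[k] U)) := by
  induction z using TensorProduct.induction_on with
  | zero => simp
  | tmul a b =>
    simp [adUnit_apply, Algebra.TensorProduct.tmul_mul_tmul]
  | add x y hx hy => simp only [map_add, hx, hy, mul_add, add_mul]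

lemma leg12_adUnit (u : (U ⊗[k] U)ˣ) (y : (U ⊗[k] U) ⊗[k] U) :
    leg12 (adUnit k u) y = el12 (↑u : U ⊗[k] U) * y * el12 (↑u⁻¹ : U ⊗[k] U) := by
  induction y using TensorProduct.induction_on with
  | zero => simp
  | tmul a b =>
    simp [leg12, el12, adUnit_apply, Algebra.TensorProduct.tmul_mul_tmul]
  | add x y hx hy => simp only [map_add, hx, hy, mul_add, add_mul]

lemma leg23_adUnit (u : (U ⊗[k] U)ˣ) (y : (U ⊗[k] U) ⊗[k] U) :
    leg23 (adUnit k u) y = el23 (↑u : U ⊗[k] U) * y * el23 (↑u⁻¹ : U ⊗[k] U) := by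
  simp only [leg23, AlgEquiv.trans_apply, congr_refl_mul, map_mul, el23,
    Algebra.TensorProduct.one_def]
  simp

lemma leg13_adUnit (u : (U ⊗[k] U)ˣ) (y : (U ⊗[k] U) ⊗[k] U) :
    leg13 (adUnit k u) y = el13 (↑u : U ⊗[k] U) * y * el13 (↑u⁻¹ : U ⊗[k] U) := by
  simp only [leg13, AlgEquiv.trans_apply, leg12_adUnit, map_mul, el13, σ23_σ23]

lemma el12_mul (a b : U ⊗[k] U) : el12 (k := k) (U := U) (a * b) = el12 a * el12 b := by
  simp [el12, Algebra.TensorProduct.tmul_mul_tmul]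

lemma el12_one : el12 (k := k) (U := U) 1 = 1 := by
  simp [el12, Algebra.TensorProduct.one_def]

lemma el23_mul (a b : U ⊗[k] U) : el23 (k := k) (U := U) (a * b) = el23 a * el23 b := by
  simp only [el23, ← map_mul, Algebra.TensorProduct.tmul_mul_tmul, one_mul]

lemma el23_one : el23 (k := k) (U := U) 1 = 1 := by
  simp [el23, Algebra.TensorProduct.one_def]

lemma el13_mul (a b : U ⊗[k] U) : el13 (k := k) (U := U) (a * b) = el13 a * el13 b := by
  simp only [el13, el12_mul, map_mul]

lemma el13_one : el13 (k := k) (U := U) 1 = 1 := by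
  simp only [el13, el12_one, map_one]
end myhelpers


/-- Lemma `lem:weak-quasi`: if `ℛ⁽⁰⁾` is an algebra automorphism of `U ⊗ U` and
`R⁽¹⁾ ∈ U ⊗ U` an invertible element satisfying (RR1)–(RR5), then
`ℛ = Ad(R⁽¹⁾) ∘ ℛ⁽⁰⁾` makes `U` a weakly quasitriangular Hopf algebra, i.e. it
satisfies (wq1), (wq2) and (wq3). -/
theorem weaklyQuasitriangular_of_RR
    {k : Type*} [Field k] {U : Type*} [Ring U] [HopfAlgebra k U]
    (R0 : (U ⊗[k] U) ≃ₐ[k] (U ⊗[k] U)) (R1 : (U ⊗[k] U)ˣ)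
    (RR1 : ∀ u : U, (R1 : U ⊗[k] U) * R0 (Bialgebra.comulAlgHom k U u) * ↑R1⁻¹ = Δop k U u)
    (RR2 : ∀ x : U ⊗[k] U, ΔId k U (R0 x) = leg13 R0 (leg23 R0 (ΔId k U x)))
    (RR3 : ∀ x : U ⊗[k] U, IdΔ k U (R0 x) = leg13 R0 (leg12 R0 (IdΔ k U x)))
    (RR4 : ΔId k U (R1 : U ⊗[k] U) = el13 (R1 : U ⊗[k] U) * leg13 R0 (el23 (R1 : U ⊗[k] U)))
    (RR5 : IdΔ k U (R1 : U ⊗[k] U) = el13 (R1 : U ⊗[k] U) * leg13 R0 (el12 (R1 : U ⊗[k] U))) :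
    (∀ u : U, (R0.trans (adUnit k R1)) (Bialgebra.comulAlgHom k U u) = Δop k U u) ∧
    (∀ x : U ⊗[k] U, ΔId k U ((R0.trans (adUnit k R1)) x) =
      leg13 (R0.trans (adUnit k R1)) (leg23 (R0.trans (adUnit k R1)) (ΔId k U x))) ∧
    (∀ x : U ⊗[k] U, IdΔ k U ((R0.trans (adUnit k R1)) x) =
      leg13 (R0.trans (adUnit k R1)) (leg12 (R0.trans (adUnit k R1)) (IdΔ k U x))) := by
  have hDinv : ΔId k U (↑R1⁻¹ : U ⊗[k] U) =
      leg13 R0 (el23 (↑R1⁻¹ : U ⊗[k] U)) * el13 (↑R1⁻¹ : U ⊗[k] U) := by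
    refine left_inv_eq_right_inv (a := ΔId k U (R1 : U ⊗[k] U)) ?_ ?_
    · rw [← map_mul]; simp
    · rw [RR4]
      calc el13 (R1 : U ⊗[k] U) * leg13 R0 (el23 (R1 : U ⊗[k] U)) *
            (leg13 R0 (el23 (↑R1⁻¹ : U ⊗[k] U)) * el13 (↑R1⁻¹ : U ⊗[k] U))
          = el13 (R1 : U ⊗[k] U) *
              (leg13 R0 (el23 ((R1 : U ⊗[k] U) * ↑R1⁻¹))) * el13 (↑R1⁻¹ : U ⊗[k] U) := by
            rw [el23_mul, map_mul]; noncomm_ring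
        _ = 1 := by
            rw [Units.mul_inv, el23_one, map_one, mul_one, ← el13_mul, Units.mul_inv, el13_one]
  have hIinv : IdΔ k U (↑R1⁻¹ : U ⊗[k] U) =
      leg13 R0 (el12 (↑R1⁻¹ : U ⊗[k] U)) * el13 (↑R1⁻¹ : U ⊗[k] U) := by
    refine left_inv_eq_right_inv (a := IdΔ k U (R1 : U ⊗[k] U)) ?_ ?_
    · rw [← map_mul]; simp
    · rw [RR5]
      calc el13 (R1 : U ⊗[k] U) * leg13 R0 (el12 (R1 : U ⊗[k] U)) *
            (leg13 R0 (el12 (↑R1⁻¹ : U ⊗[k] U)) * el13 (↑R1⁻¹ : U ⊗[k] U))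
          = el13 (R1 : U ⊗[k] U) *
              (leg13 R0 (el12 ((R1 : U ⊗[k] U) * ↑R1⁻¹))) * el13 (↑R1⁻¹ : U ⊗[k] U) := by
            rw [el12_mul, map_mul]; noncomm_ring
        _ = 1 := by
            rw [Units.mul_inv, el12_one, map_one, mul_one, ← el13_mul, Units.mul_inv, el13_one]
  refine ⟨fun u => by simpa [AlgEquiv.trans_apply, adUnit_apply] using RR1 u,
    fun x => ?_, fun x => ?_⟩
  · rw [AlgEquiv.trans_apply, adUnit_apply, map_mul, map_mul, RR2, RR4, hDinv,
      leg23_trans, leg23_adUnit, leg13_trans, leg13_adUnit, map_mul, map_mul]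
    simp only [mul_assoc]
  · rw [AlgEquiv.trans_apply, adUnit_apply, map_mul, map_mul, RR3, RR5, hIinv,
      leg12_trans, leg12_adUnit, leg13_trans, leg13_adUnit, map_mul, map_mul]
    simp only [mul_assoc]
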